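/- For d ≥ 1, the even parity polytope P_{d,even} := conv{x ∈ {0,1}^d : Σᵢ xᵢ is even} equals the set {x ∈ [0,1]^d : Σ_{i∈V} xᵢ - Σ_{i∉V} xᵢ ≤ |V| - 1 for all V ⊆ {1,…,d} with |V| odd}. -/

import Mathlib

open Finset

/-- Squared Euclidean distance on `Fin d → ℝ`. -/
noncomputable def sqdist {d : ℕ} (x y : Fin d → ℝ) : ℝ := ∑ i, (x i - y i) ^ 2

/-- `z` is the Euclidean (nearest-point) projection of `x` onto `S`. -/
def IsProj {d : ℕ} (S : Set (Fin d → ℝ)) (x z : Fin d → ℝ) : Prop :=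
  z ∈ S ∧ ∀ y ∈ S, sqdist x z ≤ sqdist x y

/-- The even parity polytope: convex hull of 0/1 vectors with an even number of ones. -/
noncomputable def PEven (d : ℕ) : Set (Fin d → ℝ) :=
  convexHull ℝ {x | ∃ S : Finset (Fin d), Even S.card ∧ ∀ i, x i = if i ∈ S then 1 else 0}

/-- The odd parity polytope: convex hull of 0/1 vectors with an odd number of ones. -/
noncomputable def POdd (d : ℕ) : Set (Fin d → ℝ) :=
  convexHull ℝ {x | ∃ S : Finset (Fin d), Odd S.card ∧ ∀ i, x i = if i ∈ S then 1 else 0}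

namespace ParityAux

open Classical

/-- membership in the polyhedron Q -/
def inQ {d : ℕ} (x : Fin d → ℝ) : Prop :=
  (∀ i, 0 ≤ x i ∧ x i ≤ 1) ∧
    ∀ V : Finset (Fin d), Odd V.card →
      ∑ i ∈ V, x i - ∑ i ∈ Vᶜ, x i ≤ (V.card : ℝ) - 1

/-- total slack of the odd-set inequality for `V` -/
noncomputable def eV {d : ℕ} (x : Fin d → ℝ) (V : Finset (Fin d)) : ℝ :=
  ∑ i, (if i ∈ V then 1 - x i else x i)

/-- fractional coordinates -/
noncomputable def Fr {d : ℕ} (x : Fin d → ℝ) : Finset (Fin d) :=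
  Finset.univ.filter (fun i => 0 < x i ∧ x i < 1)

/-- slack (non-tight) odd sets -/
noncomputable def slackS {d : ℕ} (x : Fin d → ℝ) : Finset (Finset (Fin d)) :=
  Finset.univ.filter (fun V => Odd V.card ∧ eV x V ≠ 1)

/-- the induction measure -/
noncomputable def μ {d : ℕ} (x : Fin d → ℝ) : ℕ :=
  (Fr x).card * (2 ^ d + 1) + (slackS x).card

lemma eV_eq {d : ℕ} (x : Fin d → ℝ) (V : Finset (Fin d)) :
    eV x V = (V.card : ℝ) - ∑ i ∈ V, x i + ∑ i ∈ Vᶜ, x i := by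
  unfold eV
  rw [← Finset.sum_add_sum_compl V (fun i => if i ∈ V then 1 - x i else x i)]
  have h1 : ∑ i ∈ V, (if i ∈ V then 1 - x i else x i) = ∑ i ∈ V, (1 - x i) :=
    Finset.sum_congr rfl (fun i hi => if_pos hi)
  have h2 : ∑ i ∈ Vᶜ, (if i ∈ V then 1 - x i else x i) = ∑ i ∈ Vᶜ, x i :=
    Finset.sum_congr rfl (fun i hi => if_neg (Finset.mem_compl.mp hi))
  rw [h1, h2, Finset.sum_sub_distrib, Finset.sum_const, nsmul_eq_mul, mul_one]

lemma eV_ge_one {d : ℕ} {x : Fin d → ℝ} (hx : inQ x) {V : Finset (Fin d)}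
    (hV : Odd V.card) : 1 ≤ eV x V := by
  rw [eV_eq]
  have := hx.2 V hV
  linarith

lemma constraint_of_eV {d : ℕ} {x : Fin d → ℝ} {V : Finset (Fin d)}
    (h : 1 ≤ eV x V) :
    ∑ i ∈ V, x i - ∑ i ∈ Vᶜ, x i ≤ (V.card : ℝ) - 1 := by
  rw [eV_eq] at h
  linarith

lemma sterm_nonneg {d : ℕ} {x : Fin d → ℝ} (hbox : ∀ i, 0 ≤ x i ∧ x i ≤ 1)
    (V : Finset (Fin d)) (i : Fin d) : 0 ≤ (if i ∈ V then 1 - x i else x i) := by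
  rcases hbox i with ⟨h0, h1⟩
  split_ifs <;> linarith

lemma sterm_pos {d : ℕ} {x : Fin d → ℝ} {i : Fin d} (hi : i ∈ Fr x)
    (V : Finset (Fin d)) : 0 < (if i ∈ V then 1 - x i else x i) := by
  simp only [Fr, Finset.mem_filter, Finset.mem_univ, true_and] at hi
  split_ifs <;> linarith [hi.1, hi.2]

/-- Key structural lemma: two tight odd sets either coincide or their symmetric
difference contains all fractional coordinates. -/
lemma tight_tight {d : ℕ} {x : Fin d → ℝ} (hbox : ∀ i, 0 ≤ x i ∧ x i ≤ 1)
    {V1 V2 : Finset (Fin d)} (h1 : Odd V1.card) (h2 : Odd V2.card)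
    (e1 : eV x V1 = 1) (e2 : eV x V2 = 1) :
    V1 = V2 ∨ Fr x ⊆ symmDiff V1 V2 := by
  classical
  set D := symmDiff V1 V2 with hD
  set s1 : Fin d → ℝ := fun i => if i ∈ V1 then 1 - x i else x i with hs1
  set s2 : Fin d → ℝ := fun i => if i ∈ V2 then 1 - x i else x i with hs2
  have hsum : ∀ i ∈ D, s1 i + s2 i = 1 := by
    intro i hi
    rw [hD, Finset.mem_symmDiff] at hi
    rcases hi with ⟨ha, hb⟩ | ⟨ha, hb⟩
    · simp only [hs1, hs2, if_pos ha, if_neg hb]; ring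
    · simp only [hs1, hs2, if_pos ha, if_neg hb]; ring
  have hDsum : ∑ i ∈ D, (s1 i + s2 i) = (D.card : ℝ) := by
    rw [Finset.sum_congr rfl hsum, Finset.sum_const, nsmul_eq_mul, mul_one]
  have hb1 : ∑ i ∈ D, s1 i ≤ 1 := by
    calc ∑ i ∈ D, s1 i ≤ ∑ i, s1 i :=
          Finset.sum_le_sum_of_subset_of_nonneg (Finset.subset_univ D)
            (fun i _ _ => sterm_nonneg hbox V1 i)
      _ = 1 := e1
  have hb2 : ∑ i ∈ D, s2 i ≤ 1 := by
    calc ∑ i ∈ D, s2 i ≤ ∑ i, s2 i :=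
          Finset.sum_le_sum_of_subset_of_nonneg (Finset.subset_univ D)
            (fun i _ _ => sterm_nonneg hbox V2 i)
      _ = 1 := e2
  have hcard2 : D.card ≤ 2 := by
    have : (D.card : ℝ) ≤ 2 := by
      rw [← hDsum, Finset.sum_add_distrib]; linarith
    exact_mod_cast this
  have hcardeven : Even D.card := by
    have hd1 : (V1 ∩ V2).card + (V1 \ V2).card = V1.card := Finset.card_inter_add_card_sdiff V1 V2
    have hd2 : (V2 ∩ V1).card + (V2 \ V1).card = V2.card := Finset.card_inter_add_card_sdiff V2 V1
    have hdd : D.card = (V1 \ V2).card + (V2 \ V1).card := by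
      rw [hD, symmDiff_def, Finset.sup_eq_union]
      exact Finset.card_union_of_disjoint (disjoint_sdiff_sdiff)
    have hinter : (V1 ∩ V2).card = (V2 ∩ V1).card := by rw [Finset.inter_comm]
    rcases h1 with ⟨a, ha⟩
    rcases h2 with ⟨b, hb⟩
    rw [Nat.even_iff]
    omega
  have hcase : D.card = 0 ∨ D.card = 2 := by
    rcases hcardeven with ⟨m, hm⟩
    omega
  rcases hcase with h0 | h2'
  · left
    have : D = ∅ := Finset.card_eq_zero.mp h0
    exact symmDiff_eq_bot.mp this
  · right
    intro i hi
    by_contra hiD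
    have htot : ∑ i', (s1 i' + s2 i') = 2 := by
      rw [Finset.sum_add_distrib]
      rw [show ∑ i', s1 i' = 1 from e1, show ∑ i', s2 i' = 1 from e2]
      norm_num
    have hins : ∑ i' ∈ insert i D, (s1 i' + s2 i') ≤ 2 := by
      rw [← htot]
      exact Finset.sum_le_sum_of_subset_of_nonneg (Finset.subset_univ _)
        (fun i' _ _ => add_nonneg (sterm_nonneg hbox V1 i') (sterm_nonneg hbox V2 i'))
    rw [Finset.sum_insert hiD, hDsum, h2'] at hins
    have hpos1 : 0 < s1 i := sterm_pos hi V1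
    have hpos2 : 0 < s2 i := sterm_pos hi V2
    norm_num at hins
    linarith

/-- integral points of Q are even 0/1 vectors -/
lemma zero_case {d : ℕ} {x : Fin d → ℝ} (hx : inQ x) (h0 : Fr x = ∅) :
    x ∈ PEven d := by
  classical
  have hint : ∀ i, x i = 0 ∨ x i = 1 := by
    intro i
    have hni : i ∉ Fr x := by rw [h0]; exact Finset.notMem_empty i
    simp only [Fr, Finset.mem_filter, Finset.mem_univ, true_and, not_and, not_lt] at hni
    rcases hx.1 i with ⟨ha, hb⟩
    rcases lt_or_eq_of_le ha with hlt | heq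
    · right; linarith [hni hlt]
    · left; exact heq.symm
  set S := Finset.univ.filter (fun i => x i = 1) with hS
  have hmemS : ∀ i, i ∈ S ↔ x i = 1 := by
    intro i; simp [hS]
  have hrep : ∀ i, x i = if i ∈ S then 1 else 0 := by
    intro i
    by_cases hiS : i ∈ S
    · rw [if_pos hiS]; exact (hmemS i).mp hiS
    · rw [if_neg hiS]
      rcases hint i with h | h
      · exact h
      · exact absurd ((hmemS i).mpr h) hiS
  have hSsum : ∑ i ∈ S, x i = (S.card : ℝ) := by
    rw [Finset.sum_congr rfl (fun i hi => (hmemS i).mp hi), Finset.sum_const,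
      nsmul_eq_mul, mul_one]
  have heven : Even S.card := by
    by_contra hodd
    have hodd' : Odd S.card := Nat.not_even_iff_odd.mp hodd
    have hcon := hx.2 S hodd'
    have hB : ∑ i ∈ Sᶜ, x i = 0 := by
      apply Finset.sum_eq_zero
      intro i hi
      rcases hint i with h | h
      · exact h
      · exact absurd ((hmemS i).mpr h) (Finset.mem_compl.mp hi)
    rw [hSsum, hB] at hcon
    linarith
  exact subset_convexHull ℝ _ ⟨S, heven, hrep⟩

/-- no point of Q has exactly one fractional coordinate -/
lemma one_case {d : ℕ} {x : Fin d → ℝ} (hx : inQ x) (h1 : (Fr x).card = 1) :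
    False := by
  classical
  obtain ⟨j, hj⟩ := Finset.card_eq_one.mp h1
  have hjF : j ∈ Fr x := by rw [hj]; exact Finset.mem_singleton_self j
  have hjfrac : 0 < x j ∧ x j < 1 := by
    simpa [Fr] using hjF
  have hint : ∀ i, i ≠ j → x i = 0 ∨ x i = 1 := by
    intro i hij
    have hni : i ∉ Fr x := by rw [hj]; simpa using hij
    simp only [Fr, Finset.mem_filter, Finset.mem_univ, true_and, not_and, not_lt] at hni
    rcases hx.1 i with ⟨ha, hb⟩
    rcases lt_or_eq_of_le ha with hlt | heq
    · right; linarith [hni hlt]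
    · left; exact heq.symm
  set S := Finset.univ.filter (fun i => x i = 1) with hS
  have hmemS : ∀ i, i ∈ S ↔ x i = 1 := by intro i; simp [hS]
  have hjS : j ∉ S := by
    rw [hmemS]; linarith [hjfrac.2]
  have hSsum : ∑ i ∈ S, x i = (S.card : ℝ) := by
    rw [Finset.sum_congr rfl (fun i hi => (hmemS i).mp hi), Finset.sum_const,
      nsmul_eq_mul, mul_one]
  by_cases hpar : Even S.card
  · have hodd : Odd (insert j S).card := by
      rw [Finset.card_insert_of_notMem hjS]
      exact Even.add_one hpar
    have hcon := hx.2 (insert j S) hodd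
    have hsum1 : ∑ i ∈ insert j S, x i = x j + (S.card : ℝ) := by
      rw [Finset.sum_insert hjS, hSsum]
    have hsum2 : ∑ i ∈ (insert j S)ᶜ, x i = 0 := by
      apply Finset.sum_eq_zero
      intro i hi
      have hi' := Finset.mem_compl.mp hi
      have hij : i ≠ j := by rintro rfl; exact hi' (Finset.mem_insert_self i S)
      have hiS : i ∉ S := fun h => hi' (Finset.mem_insert_of_mem h)
      rcases hint i hij with h | h
      · exact h
      · exact absurd ((hmemS i).mpr h) hiS
    rw [hsum1, hsum2, Finset.card_insert_of_notMem hjS] at hcon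
    push_cast at hcon
    linarith [hjfrac.1]
  · have hodd : Odd S.card := Nat.not_even_iff_odd.mp hpar
    have hcon := hx.2 S hodd
    have hsum2 : ∑ i ∈ Sᶜ, x i = x j := by
      apply Finset.sum_eq_single_of_mem j (Finset.mem_compl.mpr hjS)
      intro i hi hij
      rcases hint i hij with h | h
      · exact h
      · exact absurd ((hmemS i).mpr h) (Finset.mem_compl.mp hi)
    rw [hSsum, hsum2] at hcon
    linarith [hjfrac.2]

set_option maxHeartbeats 1000000 in
/-- Moving lemma: from a point with a direction supported on two fractional
coordinates that annihilates all tight constraints, we can move a positive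
amount staying in Q while strictly decreasing the measure. -/
lemma move {d : ℕ} {x : Fin d → ℝ} (hx : inQ x) {j k : Fin d}
    (hj : j ∈ Fr x) (hk : k ∈ Fr x) (hjk : j ≠ k) (uj uk : ℝ)
    (huj : uj = 1 ∨ uj = -1) (huk : uk = 1 ∨ uk = -1)
    (horth : ∀ V : Finset (Fin d), Odd V.card → eV x V = 1 →
      (if j ∈ V then -uj else uj) + (if k ∈ V then -uk else uk) = 0) :
    ∃ t : ℝ, 0 < t ∧
      inQ (x + t • (fun i => if i = j then uj else if i = k then uk else 0)) ∧
      μ (x + t • (fun i => if i = j then uj else if i = k then uk else 0)) < μ x := by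
  classical
  set u : Fin d → ℝ := fun i => if i = j then uj else if i = k then uk else 0 with hu
  have hjfrac : 0 < x j ∧ x j < 1 := by simpa [Fr] using hj
  have hkfrac : 0 < x k ∧ x k < 1 := by simpa [Fr] using hk
  have huj' : u j = uj := by simp [hu]
  have huk' : u k = uk := by simp [hu, hjk.symm]
  have hu0 : ∀ i, i ≠ j → i ≠ k → u i = 0 := by
    intro i h1 h2; simp [hu, h1, h2]
  set g : Finset (Fin d) → ℝ :=
    fun V => (if j ∈ V then -uj else uj) + (if k ∈ V then -uk else uk) with hg
  have habs : ∀ V, g V = -2 ∨ g V = 0 ∨ g V = 2 := by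
    intro V
    simp only [hg]
    rcases huj with h | h <;> rcases huk with h' | h' <;> rw [h, h'] <;>
      split_ifs <;> norm_num
  set bj : ℝ := if uj = 1 then 1 - x j else x j with hbj
  set bk : ℝ := if uk = 1 then 1 - x k else x k with hbk
  set P : Finset ℝ := insert bj (insert bk
    ((Finset.univ.filter
        (fun V : Finset (Fin d) => Odd V.card ∧ eV x V ≠ 1 ∧ g V < 0)).image
      (fun V => (eV x V - 1) / 2))) with hP
  have hbjP : bj ∈ P := by rw [hP]; exact Finset.mem_insert_self _ _
  have hbkP : bk ∈ P := by
    rw [hP]; exact Finset.mem_insert_of_mem (Finset.mem_insert_self _ _)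
  have hPne : P.Nonempty := ⟨bj, hbjP⟩
  set t := P.min' hPne with ht
  have hpos : ∀ r ∈ P, 0 < r := by
    intro r hr
    rw [hP] at hr
    simp only [Finset.mem_insert, Finset.mem_image, Finset.mem_filter,
      Finset.mem_univ, true_and] at hr
    rcases hr with rfl | rfl | ⟨V, ⟨hVodd, hVne, hVg⟩, rfl⟩
    · rw [hbj]; split_ifs <;> [linarith [hjfrac.2]; linarith [hjfrac.1]]
    · rw [hbk]; split_ifs <;> [linarith [hkfrac.2]; linarith [hkfrac.1]]
    · have h1 := eV_ge_one hx hVodd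
      have h2 : 1 < eV x V := lt_of_le_of_ne h1 (Ne.symm hVne)
      linarith
  have htpos : 0 < t := hpos t (Finset.min'_mem P hPne)
  have htle : ∀ r ∈ P, t ≤ r := fun r hr => Finset.min'_le P r hr
  set y := x + t • u with hy
  have hyi : ∀ i, y i = x i + t * u i := by
    intro i; simp [hy]
  have hyj : y j = x j + t * uj := by rw [hyi, huj']
  have hyk : y k = x k + t * uk := by rw [hyi, huk']
  have hyo : ∀ i, i ≠ j → i ≠ k → y i = x i := by
    intro i h1 h2; rw [hyi, hu0 i h1 h2, mul_zero, add_zero]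
  have heshift : ∀ V : Finset (Fin d), eV y V = eV x V + t * g V := by
    intro V
    have hterm : ∀ i, (if i ∈ V then 1 - y i else y i)
        = (if i ∈ V then 1 - x i else x i)
          + t * ((if i ∈ V then (-1 : ℝ) else 1) * u i) := by
      intro i; rw [hyi]; split_ifs <;> ring
    have hzero : ∀ i ∈ Finset.univ, i ∉ ({j, k} : Finset (Fin d)) →
        ((if i ∈ V then (-1 : ℝ) else 1) * u i) = 0 := by
      intro i _ hi
      simp only [Finset.mem_insert, Finset.mem_singleton] at hi
      push_neg at hi
      rw [hu0 i hi.1 hi.2, mul_zero]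
    have hgsum : ∑ i, ((if i ∈ V then (-1 : ℝ) else 1) * u i) = g V := by
      rw [← Finset.sum_subset (Finset.subset_univ _) hzero, Finset.sum_pair hjk,
        huj', huk']
      simp only [hg]
      congr 1 <;> split_ifs <;> ring
    unfold eV
    rw [Finset.sum_congr rfl (fun i _ => hterm i), Finset.sum_add_distrib,
      ← Finset.mul_sum, hgsum]
  have hybox : ∀ i, 0 ≤ y i ∧ y i ≤ 1 := by
    intro i
    by_cases hij : i = j
    · subst hij
      have h1 : t ≤ bj := htle bj hbjP
      rw [hyj]
      rcases huj with h | h <;> rw [hbj] at h1 <;> rw [h] at h1 ⊢ <;>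
        norm_num at h1 <;> constructor <;>
        nlinarith [hjfrac.1, hjfrac.2, htpos]
    · by_cases hik : i = k
      · subst hik
        have h1 : t ≤ bk := htle bk hbkP
        rw [hyk]
        rcases huk with h | h <;> rw [hbk] at h1 <;> rw [h] at h1 ⊢ <;>
          norm_num at h1 <;> constructor <;>
          nlinarith [hkfrac.1, hkfrac.2, htpos]
      · rw [hyo i hij hik]; exact hx.1 i
  have hyQ : inQ y := by
    refine ⟨hybox, fun V hV => ?_⟩
    apply constraint_of_eV
    rw [heshift V]
    by_cases he : eV x V = 1
    · have hgV : g V = 0 := by simp only [hg]; exact horth V hV he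
      rw [he, hgV]; norm_num
    · have hgt : 1 < eV x V := lt_of_le_of_ne (eV_ge_one hx hV) (Ne.symm he)
      rcases habs V with h | h | h
      · have hmem : (eV x V - 1) / 2 ∈ P := by
          rw [hP]
          refine Finset.mem_insert_of_mem (Finset.mem_insert_of_mem ?_)
          refine Finset.mem_image.mpr ⟨V, ?_, rfl⟩
          refine Finset.mem_filter.mpr ⟨Finset.mem_univ V, hV, he, by rw [h]; norm_num⟩
        have h2 := htle _ hmem
        rw [h]; linarith
      · rw [h]; linarith
      · rw [h]; nlinarith
  have hFrsub : Fr y ⊆ Fr x := by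
    intro i hi
    by_cases hij : i = j
    · subst hij; exact hj
    · by_cases hik : i = k
      · subst hik; exact hk
      · simp only [Fr, Finset.mem_filter, Finset.mem_univ, true_and] at hi ⊢
        rwa [hyo i hij hik] at hi
  have hslacksub : slackS y ⊆ slackS x := by
    intro V hV
    simp only [slackS, Finset.mem_filter, Finset.mem_univ, true_and] at hV ⊢
    refine ⟨hV.1, fun hex => hV.2 ?_⟩
    have hgV : g V = 0 := by simp only [hg]; exact horth V hV.1 hex
    rw [heshift V, hex, hgV]; norm_num
  have hsy_le : (slackS y).card ≤ 2 ^ d := by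
    calc (slackS y).card ≤ (Finset.univ : Finset (Finset (Fin d))).card :=
          Finset.card_le_card (Finset.subset_univ _)
      _ = 2 ^ d := by
          rw [Finset.card_univ, Fintype.card_finset, Fintype.card_fin]
  have hmm : t ∈ P := Finset.min'_mem P hPne
  rw [hP] at hmm
  simp only [Finset.mem_insert, Finset.mem_image, Finset.mem_filter,
    Finset.mem_univ, true_and] at hmm
  have hmain : μ y < μ x := by
    have hFrcase : ∀ i0, i0 ∈ Fr x → i0 ∉ Fr y → μ y < μ x := by
      intro i0 hi0x hi0y
      have hcard : (Fr y).card < (Fr x).card :=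
        Finset.card_lt_card (Finset.ssubset_iff_of_subset hFrsub |>.mpr ⟨i0, hi0x, hi0y⟩)
      have hsucc : (Fr y).card + 1 ≤ (Fr x).card := hcard
      unfold μ
      calc (Fr y).card * (2 ^ d + 1) + (slackS y).card
          < (Fr y).card * (2 ^ d + 1) + (2 ^ d + 1) :=
            Nat.add_lt_add_left (Nat.lt_succ_of_le hsy_le) _
        _ = ((Fr y).card + 1) * (2 ^ d + 1) := by ring
        _ ≤ (Fr x).card * (2 ^ d + 1) := Nat.mul_le_mul_right _ hsucc
        _ ≤ (Fr x).card * (2 ^ d + 1) + (slackS x).card := Nat.le_add_right _ _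
    rcases hmm with hcase | hcase | ⟨V0, ⟨hV0odd, hV0ne, hV0g⟩, hcase⟩
    · -- t = bj : coordinate j becomes integral
      apply hFrcase j hj
      simp only [Fr, Finset.mem_filter, Finset.mem_univ, true_and, not_and, not_lt]
      intro hy0
      rw [hyj] at hy0 ⊢
      rcases huj with h | h <;> rw [hbj, h] at hcase <;> rw [h] at hy0 ⊢ <;>
        norm_num at hcase <;> nlinarith [hjfrac.1, hjfrac.2]
    · apply hFrcase k hk
      simp only [Fr, Finset.mem_filter, Finset.mem_univ, true_and, not_and, not_lt]
      intro hy0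
      rw [hyk] at hy0 ⊢
      rcases huk with h | h <;> rw [hbk, h] at hcase <;> rw [h] at hy0 ⊢ <;>
        norm_num at hcase <;> nlinarith [hkfrac.1, hkfrac.2]
    · -- a slack constraint becomes tight
      have hg2 : g V0 = -2 := by
        rcases habs V0 with h | h | h
        · exact h
        · linarith
        · linarith
      have htight : eV y V0 = 1 := by
        rw [heshift V0, hg2, ← hcase]; ring
      have hV0y : V0 ∉ slackS y := by
        simp only [slackS, Finset.mem_filter, Finset.mem_univ, true_and, not_and]
        intro _
        simp [htight]
      have hV0x : V0 ∈ slackS x := by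
        simp only [slackS, Finset.mem_filter, Finset.mem_univ, true_and]
        exact ⟨hV0odd, hV0ne⟩
      have hslt : (slackS y).card < (slackS x).card :=
        Finset.card_lt_card (Finset.ssubset_iff_of_subset hslacksub |>.mpr ⟨V0, hV0x, hV0y⟩)
      unfold μ
      exact lt_of_le_of_lt
        (Nat.add_le_add_right (Nat.mul_le_mul_right _ (Finset.card_le_card hFrsub)) _)
        (Nat.add_lt_add_left hslt _)
  exact ⟨t, htpos, hyQ, hmain⟩

set_option maxHeartbeats 1000000 in
lemma q_sub_peven {d : ℕ} : ∀ (n : ℕ) (x : Fin d → ℝ), inQ x → μ x ≤ n → x ∈ PEven d := by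
  classical
  have hPc : Convex ℝ (PEven d) := by unfold PEven; exact convex_convexHull ℝ _
  intro n
  induction n with
  | zero =>
    intro x hx hμ
    have h0 : μ x = 0 := Nat.le_zero.mp hμ
    unfold μ at h0
    have h1 := (Nat.add_eq_zero.mp h0).1
    rcases Nat.mul_eq_zero.mp h1 with h2 | h2
    · exact zero_case hx (Finset.card_eq_zero.mp h2)
    · exact absurd h2 (Nat.succ_ne_zero _)
  | succ n ih =>
    intro x hx hμ
    rcases Nat.lt_or_ge (Fr x).card 2 with hlt | hge
    · by_cases h0 : (Fr x).card = 0
      · exact zero_case hx (Finset.card_eq_zero.mp h0)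
      · have h1 : (Fr x).card = 1 := by omega
        exact (one_case hx h1).elim
    · obtain ⟨j, hj, k, hk, hjk⟩ := Finset.one_lt_card.mp hge
      set c : ℝ := if (∃ V : Finset (Fin d), Odd V.card ∧ eV x V = 1 ∧ ((j ∈ V) ↔ (k ∈ V)))
        then -1 else 1 with hc
      have hcval : c = 1 ∨ c = -1 := by
        rw [hc]; split_ifs <;> norm_num
      have horth : ∀ V : Finset (Fin d), Odd V.card → eV x V = 1 →
          (if j ∈ V then -(1:ℝ) else 1) + (if k ∈ V then -c else c) = 0 := by
        intro V hV he
        by_cases hm : (j ∈ V) ↔ (k ∈ V)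
        · have hc1 : c = -1 := by rw [hc, if_pos ⟨V, hV, he, hm⟩]
          by_cases hjV : j ∈ V
          · rw [if_pos hjV, if_pos (hm.mp hjV), hc1]; ring
          · rw [if_neg hjV, if_neg (fun h => hjV (hm.mpr h)), hc1]; ring
        · have hc1 : c = 1 := by
            rw [hc, if_neg]
            rintro ⟨V', hV', he', hm'⟩
            rcases tight_tight hx.1 hV hV' he he' with rfl | hsub
            · exact hm hm'
            · have hjD := hsub hj
              have hkD := hsub hk
              rw [Finset.mem_symmDiff] at hjD hkD
              tauto
          by_cases hjV : j ∈ V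
          · have hkV : k ∉ V := by tauto
            rw [if_pos hjV, if_neg hkV, hc1]; ring
          · have hkV : k ∈ V := by tauto
            rw [if_neg hjV, if_pos hkV, hc1]; ring
      have horth' : ∀ V : Finset (Fin d), Odd V.card → eV x V = 1 →
          (if j ∈ V then -(-1:ℝ) else -1) + (if k ∈ V then -(-c) else -c) = 0 := by
        intro V hV he
        have h := horth V hV he
        split_ifs at h ⊢ <;> linarith
      have hcval' : -c = 1 ∨ -c = -1 := by
        rcases hcval with h | h <;> rw [h] <;> norm_num
      obtain ⟨t1, ht1, hQ1, hμ1⟩ := move hx hj hk hjk 1 c (Or.inl rfl) hcval horth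
      obtain ⟨t2, ht2, hQ2, hμ2⟩ := move hx hj hk hjk (-1) (-c) (Or.inr rfl) hcval' horth'
      set u1 : Fin d → ℝ := fun i => if i = j then (1:ℝ) else if i = k then c else 0 with hu1
      set u2 : Fin d → ℝ := fun i => if i = j then (-1:ℝ) else if i = k then -c else 0 with hu2
      have hu21 : ∀ i, u2 i = -(u1 i) := by
        intro i
        simp only [hu1, hu2]
        split_ifs <;> ring
      set y1 := x + t1 • u1 with hy1
      set y2 := x + t2 • u2 with hy2
      have hmem1 : y1 ∈ PEven d := ih y1 hQ1 (by omega)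
      have hmem2 : y2 ∈ PEven d := ih y2 hQ2 (by omega)
      have hne : t1 + t2 ≠ 0 := by positivity
      set a := t2 / (t1 + t2) with ha
      set b := t1 / (t1 + t2) with hb
      have ha0 : 0 ≤ a := by rw [ha]; positivity
      have hb0 : 0 ≤ b := by rw [hb]; positivity
      have hab : a + b = 1 := by
        rw [ha, hb]; field_simp; ring
      have hxcomb : a • y1 + b • y2 = x := by
        funext i
        have e1 : y1 i = x i + t1 * u1 i := by simp [hy1]
        have e2 : y2 i = x i + t2 * (-(u1 i)) := by
          simp only [hy2, Pi.add_apply, Pi.smul_apply, smul_eq_mul, hu21 i]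
        simp only [Pi.add_apply, Pi.smul_apply, smul_eq_mul, e1, e2, ha, hb]
        field_simp
        ring
      exact hxcomb ▸ (hPc hmem1 hmem2 ha0 hb0 hab)

lemma peven_sub_q {d : ℕ} {x : Fin d → ℝ} (hx : x ∈ PEven d) : inQ x := by
  classical
  have hconv : Convex ℝ {y : Fin d → ℝ | inQ y} := by
    intro y hy z hz a b ha hb hab
    constructor
    · intro i
      have hy1 := hy.1 i
      have hz1 := hz.1 i
      simp only [Pi.add_apply, Pi.smul_apply, smul_eq_mul]
      constructor
      · have := add_nonneg (mul_nonneg ha hy1.1) (mul_nonneg hb hz1.1)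
        linarith
      · nlinarith [mul_le_mul_of_nonneg_left hy1.2 ha, mul_le_mul_of_nonneg_left hz1.2 hb]
    · intro V hV
      have hy2 := hy.2 V hV
      have hz2 := hz.2 V hV
      have expand : ∀ (s : Finset (Fin d)),
          ∑ i ∈ s, (a • y + b • z) i = a * ∑ i ∈ s, y i + b * ∑ i ∈ s, z i := by
        intro s
        simp only [Pi.add_apply, Pi.smul_apply, smul_eq_mul]
        rw [Finset.sum_add_distrib, Finset.mul_sum, Finset.mul_sum]
      rw [expand, expand]
      nlinarith [mul_le_mul_of_nonneg_left hy2 ha, mul_le_mul_of_nonneg_left hz2 hb]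
  have hbase : {y : Fin d → ℝ | ∃ S : Finset (Fin d), Even S.card ∧
      ∀ i, y i = if i ∈ S then 1 else 0} ⊆ {y : Fin d → ℝ | inQ y} := by
    rintro y ⟨S, hSeven, hrep⟩
    constructor
    · intro i
      rw [hrep i]
      split_ifs <;> norm_num
    · intro V hV
      have hsum : ∀ (s : Finset (Fin d)), ∑ i ∈ s, y i = ((s ∩ S).card : ℝ) := by
        intro s
        rw [Finset.sum_congr rfl (fun i _ => hrep i), Finset.sum_boole,
          Finset.filter_mem_eq_inter]
      rw [hsum, hsum]
      by_cases hVS : V ⊆ S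
      · have hVint : V ∩ S = V := Finset.inter_eq_left.mpr hVS
        have hcompl : Vᶜ ∩ S = S \ V := by
          ext i
          simp only [Finset.mem_inter, Finset.mem_compl, Finset.mem_sdiff]
          tauto
        have hlt : V.card < S.card := by
          have hle := Finset.card_le_card hVS
          rcases lt_or_eq_of_le hle with h | h
          · exact h
          · exfalso
            rw [h] at hV
            exact (Nat.not_odd_iff_even.mpr hSeven) hV
        have hcard : (S \ V).card = S.card - V.card := Finset.card_sdiff_of_subset hVS
        have h1 : 1 ≤ (S \ V).card := by omega
        have h1' : (1 : ℝ) ≤ ((S \ V).card : ℝ) := by exact_mod_cast h1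
        rw [hVint, hcompl]
        linarith
      · have hss : V ∩ S ⊂ V := by
          refine ⟨Finset.inter_subset_left, fun hsub => hVS ?_⟩
          intro i hi
          exact (Finset.mem_inter.mp (hsub hi)).2
        have hlt := Finset.card_lt_card hss
        have h1 : ((V ∩ S).card : ℝ) ≤ (V.card : ℝ) - 1 := by
          have : (V ∩ S).card + 1 ≤ V.card := hlt
          have := (Nat.cast_le (α := ℝ)).mpr this
          push_cast at this
          linarith
        have h2 : (0 : ℝ) ≤ ((Vᶜ ∩ S).card : ℝ) := Nat.cast_nonneg _
        linarith
  exact convexHull_min hbase hconv hx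

end ParityAux

theorem even_parity_polytope_description (d : ℕ) (hd : 1 ≤ d) :
    PEven d = {x : Fin d → ℝ | (∀ i, 0 ≤ x i ∧ x i ≤ 1) ∧
      ∀ V : Finset (Fin d), Odd V.card →
        ∑ i ∈ V, x i - ∑ i ∈ Vᶜ, x i ≤ (V.card : ℝ) - 1} := by
  ext x
  constructor
  · intro hx
    exact ParityAux.peven_sub_q hx
  · intro hx
    exact ParityAux.q_sub_peven (ParityAux.μ x) x hx le_rfl
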